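/- arXiv:2412.18471 — 3 statements merged into one kernel-verified Lean document; each statement's English description precedes it below -/
import Mathlib

section
/- Fix an integer n ≥ 1 and an n-times differentiable function μ : ℝ → ℝ. For every t ∈ ℝ, the matrix identity T_n(μ^{(1)}(t)) + T_n(μ(t))·A = A·T_n(μ(t)) + B_α(t)·e_1ᵀ holds, where T_n(μ^{(1)}(t)) denotes the matrix obtained from T_n by shifting all derivative orders up by one (its (j,k) entry is α_{j,j−k} μ^{(j−k+1)}(t) for k ≤ j and 0 otherwise). -/
open Matrix

/-- The coefficients `α_{j,i}` (`j` is 1-based) for fixed order `n`, defined by the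
recursion `α_{j,0} = 1`, `α_{n,i} = (-1)^i`, `α_{j,i} = α_{j+1,i} - α_{j,i-1}`. -/
def alphaCoef (n : ℕ) (j i : ℕ) : ℤ :=
  if n ≤ j then (-1) ^ i
  else if i = 0 then 1
  else alphaCoef n (j + 1) i - alphaCoef n j (i - 1)
termination_by (n - j, i)
decreasing_by
  · apply Prod.Lex.left; omega
  · apply Prod.Lex.right' <;> omega

/-- The modulating-function-based transformation matrix `T_n(μ(t))`, whose (1-based)
`(j,k)` entry is `α_{j,j-k} μ^{(j-k)}(t)` for `k ≤ j` and `0` otherwise. -/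
noncomputable def Tmat (n : ℕ) (μ : ℝ → ℝ) (t : ℝ) : Matrix (Fin n) (Fin n) ℝ :=
  Matrix.of fun j k : Fin n =>
    if (k : ℕ) ≤ (j : ℕ) then
      (alphaCoef n ((j : ℕ) + 1) ((j : ℕ) - (k : ℕ)) : ℝ) * iteratedDeriv ((j : ℕ) - (k : ℕ)) μ t
    else 0

/-- `T_n(μ^{(1)}(t))`: the matrix obtained from `T_n` by shifting all derivative
orders up by one; its (1-based) `(j,k)` entry is `α_{j,j-k} μ^{(j-k+1)}(t)` for `k ≤ j`. -/
noncomputable def TmatShift (n : ℕ) (μ : ℝ → ℝ) (t : ℝ) : Matrix (Fin n) (Fin n) ℝ :=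
  Matrix.of fun j k : Fin n =>
    if (k : ℕ) ≤ (j : ℕ) then
      (alphaCoef n ((j : ℕ) + 1) ((j : ℕ) - (k : ℕ)) : ℝ) * iteratedDeriv ((j : ℕ) - (k : ℕ) + 1) μ t
    else 0

/-- The Brunovsky (nilpotent shift) matrix `A`: ones on the superdiagonal, zeros elsewhere. -/
def Amat (n : ℕ) : Matrix (Fin n) (Fin n) ℝ :=
  Matrix.of fun j k : Fin n => if (k : ℕ) = (j : ℕ) + 1 then 1 else 0

/-- First standard basis vector `e₁` of `ℝⁿ`. -/
def e1vec (n : ℕ) : Fin n → ℝ := fun k => if (k : ℕ) = 0 then 1 else 0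

/-- Last standard basis vector `B₀ = (0,…,0,1)ᵀ` of `ℝⁿ`. -/
def B0vec (n : ℕ) : Fin n → ℝ := fun k => if (k : ℕ) = n - 1 then 1 else 0

/-- The vector `B_α(t)` whose (1-based) `j`-th entry is `(-1)^(j-1) C(n,j) μ^{(j)}(t)`. -/
noncomputable def Balpha (n : ℕ) (μ : ℝ → ℝ) (t : ℝ) : Fin n → ℝ :=
  fun j => (-1 : ℝ) ^ (j : ℕ) * (n.choose ((j : ℕ) + 1)) * iteratedDeriv ((j : ℕ) + 1) μ t


lemma alpha_eq_aux (n : ℕ) : ∀ d i j, n - j = d → j ≤ n →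
    alphaCoef n j i = (-1) ^ i * ((n - j + i).choose i : ℤ) := by
  intro d
  induction d with
  | zero =>
    intro i j h hj
    have : j = n := by omega
    subst this
    rw [alphaCoef]
    simp
  | succ d ihd =>
    intro i
    induction i with
    | zero =>
      intro j h hj
      rw [alphaCoef]
      simp [show ¬ n ≤ j by omega]
    | succ m ihm =>
      intro j h hj
      rw [alphaCoef]
      simp only [show ¬ n ≤ j by omega, if_false, Nat.succ_ne_zero, Nat.add_sub_cancel]
      rw [ihd (m+1) (j+1) (by omega) (by omega), ihm j h hj]
      have h1 : n - (j+1) + (m+1) = n - j + m := by omega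
      rw [h1]
      have h2 : n - j + (m + 1) = (n - j + m) + 1 := by omega
      rw [h2, Nat.choose_succ_succ (n - j + m) m]
      push_cast
      ring

lemma alphaR (n j i : ℕ) (h : j ≤ n) :
    ((alphaCoef n j i : ℤ) : ℝ) = (-1) ^ i * ((n - j + i).choose i : ℝ) := by
  rw [alpha_eq_aux n (n - j) i j rfl h]
  push_cast
  ring

lemma pascal_real (n j : ℕ) (h : 1 ≤ n) :
    (n.choose (j+1) : ℝ) = ((n-1).choose j : ℝ) + ((n-1).choose (j+1) : ℝ) := by
  obtain ⟨m, rfl⟩ : ∃ m, n = m + 1 := ⟨n-1, by omega⟩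
  rw [Nat.choose_succ_succ]
  simp only [Nat.add_sub_cancel]
  push_cast
  ring

lemma mul_Amat (n : ℕ) (M : Matrix (Fin n) (Fin n) ℝ) (j k : Fin n) :
    (M * Amat n) j k = if h : 1 ≤ (k : ℕ) then M j ⟨(k : ℕ) - 1, by omega⟩ else 0 := by
  rw [Matrix.mul_apply]
  split
  · rename_i h
    rw [Finset.sum_eq_single (⟨(k:ℕ)-1, by omega⟩ : Fin n)]
    · simp [Amat]; omega
    · intro b _ hb
      have : ¬ ((k:ℕ) = (b:ℕ) + 1) := by
        intro he; apply hb; apply Fin.ext; simp; omega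
      simp [Amat, this]
    · simp
  · rename_i h
    apply Finset.sum_eq_zero
    intro b _
    have : ¬ ((k:ℕ) = (b:ℕ) + 1) := by omega
    simp [Amat, this]

lemma Amat_mul (n : ℕ) (M : Matrix (Fin n) (Fin n) ℝ) (j k : Fin n) :
    (Amat n * M) j k = if h : (j : ℕ) + 1 < n then M ⟨(j : ℕ) + 1, h⟩ k else 0 := by
  rw [Matrix.mul_apply]
  split
  · rename_i h
    rw [Finset.sum_eq_single (⟨(j:ℕ)+1, h⟩ : Fin n)]
    · simp [Amat]
    · intro b _ hb
      have : ¬ ((b:ℕ) = (j:ℕ) + 1) := by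
        intro he; apply hb; apply Fin.ext; simpa using he
      simp [Amat, this]
    · simp
  · rename_i h
    apply Finset.sum_eq_zero
    intro b _
    have : ¬ ((b:ℕ) = (j:ℕ) + 1) := by omega
    simp [Amat, this]

/-- for `n ≥ 1` and an `n`-times differentiable `μ`, for every `t`,
`T_n(μ^{(1)}(t)) + T_n(μ(t))·A = A·T_n(μ(t)) + B_α(t)·e₁ᵀ`. -/
theorem Tmat_shift_add_mul_brunovsky (n : ℕ) (hn : 1 ≤ n) (μ : ℝ → ℝ)
    (hμ : ContDiff ℝ n μ) (t : ℝ) :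
    TmatShift n μ t + Tmat n μ t * Amat n
      = Amat n * Tmat n μ t + vecMulVec (Balpha n μ t) (e1vec n) := by
  ext j k
  have hj : (j : ℕ) < n := j.isLt
  have hkn : (k : ℕ) < n := k.isLt
  rw [Matrix.add_apply, Matrix.add_apply, mul_Amat, Amat_mul, vecMulVec_apply]
  simp only [TmatShift, Tmat, Matrix.of_apply, Balpha, e1vec]
  by_cases hk : (k : ℕ) = 0
  · -- first column
    simp only [hk, Nat.zero_le, if_true, if_pos rfl, dif_neg (by omega : ¬ (1:ℕ) ≤ 0),
      Nat.sub_zero, mul_one, add_zero]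
    by_cases hjn : (j : ℕ) + 1 < n
    · rw [dif_pos hjn]
      try simp only [if_pos (by omega : (0:ℕ) ≤ (j:ℕ) + 1), Nat.sub_zero]
      rw [alphaR n ((j:ℕ)+1) (j:ℕ) (by omega), alphaR n ((j:ℕ)+2) ((j:ℕ)+1) (by omega)]
      have e1 : n - ((j:ℕ)+1) + (j:ℕ) = n - 1 := by omega
      have e2 : n - ((j:ℕ)+2) + ((j:ℕ)+1) = n - 1 := by omega
      rw [e1, e2]
      rw [pascal_real n (j:ℕ) hn]
      ring
    · rw [dif_neg hjn]
      have hje : (j : ℕ) = n - 1 := by omega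
      rw [alphaR n ((j:ℕ)+1) (j:ℕ) (by omega)]
      have e1 : n - ((j:ℕ)+1) + (j:ℕ) = (j:ℕ) := by omega
      have e2 : n.choose ((j:ℕ)+1) = 1 := by
        rw [show (j:ℕ)+1 = n by omega, Nat.choose_self]
      rw [e1, e2, Nat.choose_self]
      push_cast
      ring
  · -- columns k ≥ 1
    rw [dif_pos (by omega : 1 ≤ (k:ℕ))]
    simp only [if_pos rfl, if_neg hk, mul_zero, add_zero]
    by_cases hkj : (k : ℕ) ≤ (j : ℕ)
    · rw [if_pos hkj, if_pos (by omega : (k:ℕ) - 1 ≤ (j:ℕ))]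
      have e0 : (j:ℕ) - ((k:ℕ) - 1) = (j:ℕ) - (k:ℕ) + 1 := by omega
      rw [e0]
      by_cases hjn : (j : ℕ) + 1 < n
      · rw [dif_pos hjn]
        try simp only [Fin.val_mk]
        rw [if_pos (by omega : (k:ℕ) ≤ (j:ℕ) + 1)]
        have e1 : (j:ℕ) + 1 - (k:ℕ) = (j:ℕ) - (k:ℕ) + 1 := by omega
        rw [e1]
        rw [alphaR n ((j:ℕ)+1) ((j:ℕ)-(k:ℕ)) (by omega),
          alphaR n ((j:ℕ)+1) ((j:ℕ)-(k:ℕ)+1) (by omega),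
          alphaR n ((j:ℕ)+2) ((j:ℕ)-(k:ℕ)+1) (by omega)]
        have e2 : n - ((j:ℕ)+1) + ((j:ℕ)-(k:ℕ)) = n - 1 - (k:ℕ) := by omega
        have e3 : n - ((j:ℕ)+1) + ((j:ℕ)-(k:ℕ)+1) = (n - 1 - (k:ℕ)) + 1 := by omega
        have e4 : n - ((j:ℕ)+2) + ((j:ℕ)-(k:ℕ)+1) = n - 1 - (k:ℕ) := by omega
        rw [e2, e3, e4, Nat.choose_succ_succ (n - 1 - (k:ℕ)) ((j:ℕ)-(k:ℕ))]
        push_cast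
        ring
      · rw [dif_neg hjn]
        have hje : (j : ℕ) + 1 = n := by omega
        rw [alphaR n ((j:ℕ)+1) ((j:ℕ)-(k:ℕ)) (by omega),
          alphaR n ((j:ℕ)+1) ((j:ℕ)-(k:ℕ)+1) (by omega)]
        have e2 : n - ((j:ℕ)+1) + ((j:ℕ)-(k:ℕ)) = (j:ℕ)-(k:ℕ) := by omega
        have e3 : n - ((j:ℕ)+1) + ((j:ℕ)-(k:ℕ)+1) = (j:ℕ)-(k:ℕ)+1 := by omega
        rw [e2, e3, Nat.choose_self, Nat.choose_self]
        push_cast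
        ring
    · rw [if_neg hkj]
      by_cases hkj1 : (k : ℕ) = (j : ℕ) + 1
      · have hjn : (j : ℕ) + 1 < n := by omega
        rw [dif_pos hjn]
        try simp only [Fin.val_mk]
        rw [if_pos (by omega : (k:ℕ) - 1 ≤ (j:ℕ)), if_pos (by omega : (k:ℕ) ≤ (j:ℕ)+1)]
        have e0 : (j:ℕ) - ((k:ℕ) - 1) = 0 := by omega
        have e1 : (j:ℕ) + 1 - (k:ℕ) = 0 := by omega
        rw [e0, e1]
        rw [alphaR n ((j:ℕ)+1) 0 (by omega), alphaR n ((j:ℕ)+2) 0 (by omega)]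
        simp
      · rw [if_neg (by omega : ¬ ((k:ℕ) - 1 ≤ (j:ℕ)))]
        by_cases hjn : (j : ℕ) + 1 < n
        · rw [dif_pos hjn]
          try simp only [Fin.val_mk]
          rw [if_neg (by omega : ¬ ((k:ℕ) ≤ (j:ℕ)+1))]
          ring
        · rw [dif_neg hjn]
          ring
end

section
/- Fix an integer n ≥ 1 and an n-times differentiable function μ : ℝ → ℝ. For every t with μ(t) ≠ 0, the matrix T_n(μ(t)) is invertible and G_n(μ(t)) := (T_n(μ^{(1)}(t)) + T_n(μ(t))·A)·T_n(μ(t))^{−1} equals A + μ(t)^{−1} B_α(t) e_1ᵀ; explicitly, G_n(μ(t)) is the matrix whose first column has j-th entry (−1)^{j−1} binom(n,j) μ^{(j)}(t)/μ(t), whose superdiagonal entries are all 1, and whose remaining entries are 0. (Here T_n(μ^{(1)}(t)) is obtained from T_n by shifting all derivative orders up by one.) -/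
open Matrix

/-! ### Auxiliary lemmas -/

lemma alphaCoef_eq (n j i : ℕ) : alphaCoef n j i = (-1) ^ i * ((n - j + i).choose i : ℤ) := by
  induction j, i using alphaCoef.induct n with
  | case1 j i h =>
    rw [alphaCoef, if_pos h, Nat.sub_eq_zero_of_le h]
    simp
  | case2 j h =>
    rw [alphaCoef, if_neg h, if_pos rfl]
    simp
  | case3 j i h h0 ih1 ih2 =>
    rw [alphaCoef, if_neg h, if_neg h0, ih1, ih2]
    obtain ⟨m, rfl⟩ := Nat.exists_eq_succ_of_ne_zero h0
    have e1 : n - (j + 1) + (m + 1) = n - j + m := by omega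
    have e2 : n - j + (m + 1 - 1) = n - j + m := by omega
    have e3 : n - j + (m + 1) = (n - j + m) + 1 := by omega
    rw [e1, e2, e3, Nat.choose_succ_succ]
    push_cast [Nat.succ_eq_add_one, pow_succ]
    ring

lemma alphaCoef_zero (n j : ℕ) : alphaCoef n j 0 = 1 := by
  rw [alphaCoef]; split <;> simp

/-- ℕ-indexed entries of `Tmat`. -/
noncomputable def Tent (n : ℕ) (μ : ℝ → ℝ) (t : ℝ) (j k : ℕ) : ℝ :=
  if k ≤ j then (alphaCoef n (j + 1) (j - k) : ℝ) * iteratedDeriv (j - k) μ t else 0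

/-- ℕ-indexed entries of `TmatShift`. -/
noncomputable def Sent (n : ℕ) (μ : ℝ → ℝ) (t : ℝ) (j k : ℕ) : ℝ :=
  if k ≤ j then (alphaCoef n (j + 1) (j - k) : ℝ) * iteratedDeriv (j - k + 1) μ t else 0

lemma mulA_apply (n : ℕ) (T : Matrix (Fin n) (Fin n) ℝ) (j k : Fin n) :
    (T * Amat n) j k = if h : 0 < (k : ℕ) then T j ⟨(k : ℕ) - 1, by omega⟩ else 0 := by
  rw [Matrix.mul_apply]
  by_cases hk : 0 < (k : ℕ)
  · rw [dif_pos hk]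
    rw [Finset.sum_eq_single_of_mem (⟨(k : ℕ) - 1, by omega⟩ : Fin n) (Finset.mem_univ _)
      (fun b _ hb => by
        have : ¬ ((k : ℕ) = (b : ℕ) + 1) := fun he => hb (Fin.ext (by simp; omega))
        simp [Amat, this])]
    have hA : Amat n (⟨(k : ℕ) - 1, by omega⟩ : Fin n) k = 1 := by
      simp only [Amat, Matrix.of_apply]
      rw [if_pos]
      show (k : ℕ) = (k : ℕ) - 1 + 1
      omega
    rw [hA, mul_one]
  · rw [dif_neg hk]
    exact Finset.sum_eq_zero fun m _ => by
      have : ¬ ((k : ℕ) = (m : ℕ) + 1) := by omega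
      simp [Amat, this]

lemma Amul_apply (n : ℕ) (T : Matrix (Fin n) (Fin n) ℝ) (j k : Fin n) :
    (Amat n * T) j k = if h : (j : ℕ) + 1 < n then T ⟨(j : ℕ) + 1, h⟩ k else 0 := by
  rw [Matrix.mul_apply]
  by_cases hj : (j : ℕ) + 1 < n
  · rw [dif_pos hj]
    rw [Finset.sum_eq_single_of_mem (⟨(j : ℕ) + 1, hj⟩ : Fin n) (Finset.mem_univ _)
      (fun b _ hb => by
        have : ¬ ((b : ℕ) = (j : ℕ) + 1) := fun he => hb (Fin.ext (by simpa using he))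
        simp [Amat, this])]
    have hA : Amat n j (⟨(j : ℕ) + 1, hj⟩ : Fin n) = 1 := by
      simp [Amat]
    rw [hA, one_mul]
  · rw [dif_neg hj]
    exact Finset.sum_eq_zero fun m _ => by
      have : ¬ ((m : ℕ) = (j : ℕ) + 1) := by omega
      simp [Amat, this]

lemma vmv_mul_apply (n : ℕ) (hn : 0 < n) (B : Fin n → ℝ) (T : Matrix (Fin n) (Fin n) ℝ)
    (j k : Fin n) : (vecMulVec B (e1vec n) * T) j k = B j * T ⟨0, hn⟩ k := by
  rw [Matrix.mul_apply]
  rw [Finset.sum_eq_single_of_mem (⟨0, hn⟩ : Fin n) (Finset.mem_univ _)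
    (fun b _ hb => by
      have : ¬ ((b : ℕ) = 0) := fun he => hb (Fin.ext (by simpa using he))
      simp [vecMulVec, e1vec, this])]
  simp [vecMulVec, e1vec]

/-- Key identity, superdiagonal/strict-lower columns, non-last row. -/
lemma keyA (n : ℕ) (μ : ℝ → ℝ) (t : ℝ) (j k : ℕ) (hj : j + 1 < n) (hk : 0 < k) :
    Sent n μ t j k + Tent n μ t j (k - 1) = Tent n μ t (j + 1) k := by
  by_cases hkj : k ≤ j
  · simp only [Sent, Tent]
    rw [if_pos hkj, if_pos (by omega : k - 1 ≤ j), if_pos (by omega : k ≤ j + 1)]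
    have e1 : j - (k - 1) = (j - k) + 1 := by omega
    have e2 : j + 1 - k = (j - k) + 1 := by omega
    rw [e1, e2]
    set i := j - k with hi
    rw [alphaCoef_eq, alphaCoef_eq, alphaCoef_eq]
    have f1 : n - (j + 1) + i = n - k - 1 := by omega
    have f2 : n - (j + 1) + (i + 1) = (n - k - 1) + 1 := by omega
    have f3 : n - (j + 1 + 1) + (i + 1) = n - k - 1 := by omega
    rw [f1, f2, f3, Nat.choose_succ_succ]
    simp only [Nat.succ_eq_add_one]
    push_cast [pow_succ]
    ring
  · by_cases hkj1 : k = j + 1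
    · simp only [Sent, Tent]
      rw [if_neg hkj, if_pos (by omega : k - 1 ≤ j), if_pos (by omega : k ≤ j + 1)]
      rw [show j - (k - 1) = 0 by omega, show j + 1 - k = 0 by omega, alphaCoef_zero,
        alphaCoef_zero]
      simp
    · simp only [Sent, Tent]
      rw [if_neg hkj, if_neg (by omega : ¬ k - 1 ≤ j), if_neg (by omega : ¬ k ≤ j + 1)]
      simp

/-- Key identity, superdiagonal/strict-lower columns, last row. -/
lemma keyB (n : ℕ) (μ : ℝ → ℝ) (t : ℝ) (j k : ℕ) (hj : j + 1 = n) (hk : 0 < k) (hkn : k < n) :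
    Sent n μ t j k + Tent n μ t j (k - 1) = 0 := by
  have hkj : k ≤ j := by omega
  simp only [Sent, Tent]
  rw [if_pos hkj, if_pos (by omega : k - 1 ≤ j)]
  have e1 : j - (k - 1) = (j - k) + 1 := by omega
  rw [e1]
  set i := j - k with hi
  rw [alphaCoef_eq, alphaCoef_eq]
  have f1 : n - (j + 1) + i = i := by omega
  have f2 : n - (j + 1) + (i + 1) = i + 1 := by omega
  rw [f1, f2, Nat.choose_self, Nat.choose_self]
  push_cast [pow_succ]
  ring

/-- Key identity, first column, non-last row. -/
lemma keyC (n : ℕ) (μ : ℝ → ℝ) (t : ℝ) (j : ℕ) (hj : j + 1 < n) :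
    Sent n μ t j 0 = Tent n μ t (j + 1) 0
      + (-1 : ℝ) ^ j * (n.choose (j + 1)) * iteratedDeriv (j + 1) μ t := by
  simp only [Sent, Tent]
  rw [if_pos (Nat.zero_le _), if_pos (Nat.zero_le _), Nat.sub_zero, Nat.sub_zero]
  rw [alphaCoef_eq, alphaCoef_eq]
  have f1 : n - (j + 1) + j = n - 1 := by omega
  have f2 : n - (j + 1 + 1) + (j + 1) = n - 1 := by omega
  have f3 : n.choose (j + 1) = (n - 1).choose j + (n - 1).choose (j + 1) := by
    obtain ⟨m, rfl⟩ : ∃ m, n = m + 1 := ⟨n - 1, by omega⟩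
    simp [Nat.choose_succ_succ]
  rw [f1, f2, f3]
  push_cast [pow_succ]
  ring

/-- Key identity, first column, last row. -/
lemma keyD (n : ℕ) (μ : ℝ → ℝ) (t : ℝ) (j : ℕ) (hj : j + 1 = n) :
    Sent n μ t j 0 = (-1 : ℝ) ^ j * (n.choose (j + 1)) * iteratedDeriv (j + 1) μ t := by
  simp only [Sent]
  rw [if_pos (Nat.zero_le _), Nat.sub_zero]
  rw [alphaCoef_eq]
  have f1 : n - (j + 1) + j = j := by omega
  rw [f1, Nat.choose_self, ← hj, Nat.choose_self]
  push_cast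
  ring

/-- for `n ≥ 1`, `μ` `n`-times differentiable and `μ(t) ≠ 0`, `T_n(μ(t))`
is invertible and `G_n(μ(t)) = (T_n(μ^{(1)}(t)) + T_n(μ(t))A) T_n(μ(t))⁻¹` equals
`A + μ(t)⁻¹ B_α(t) e₁ᵀ`, i.e. explicitly the matrix with first column entries
`(-1)^(j-1) C(n,j) μ^{(j)}(t)/μ(t)`, superdiagonal entries `1`, and zeros elsewhere. -/
theorem Gmat_eq (n : ℕ) (hn : 1 ≤ n) (μ : ℝ → ℝ) (hμ : ContDiff ℝ n μ) (t : ℝ)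
    (hμt : μ t ≠ 0) :
    IsUnit (Tmat n μ t) ∧
    (TmatShift n μ t + Tmat n μ t * Amat n) * (Tmat n μ t)⁻¹
      = Amat n + (μ t)⁻¹ • vecMulVec (Balpha n μ t) (e1vec n) ∧
    (TmatShift n μ t + Tmat n μ t * Amat n) * (Tmat n μ t)⁻¹
      = Matrix.of fun j k : Fin n =>
          if (k : ℕ) = 0 then
            (-1 : ℝ) ^ (j : ℕ) * (n.choose ((j : ℕ) + 1)) * iteratedDeriv ((j : ℕ) + 1) μ t / μ t
          else if (k : ℕ) = (j : ℕ) + 1 then 1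
          else 0 := by
  have hn0 : 0 < n := hn
  have hdet : (Tmat n μ t).det = μ t ^ n := by
    rw [Matrix.det_of_lowerTriangular (Tmat n μ t)
      (by
        intro a b hab
        simp only [Tmat, Matrix.of_apply]
        rw [if_neg]
        exact Nat.not_le.mpr hab)]
    have hdiag : ∀ i : Fin n, Tmat n μ t i i = μ t := by
      intro i
      simp [Tmat, alphaCoef_zero]
    simp [hdiag]
  have hdu : IsUnit (Tmat n μ t).det := by
    rw [hdet]; exact (pow_ne_zero n hμt).isUnit
  have hunit : IsUnit (Tmat n μ t) := (Matrix.isUnit_iff_isUnit_det _).2 hdu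
  have hinv : Tmat n μ t * (Tmat n μ t)⁻¹ = 1 := Matrix.mul_nonsing_inv _ hdu
  have key : TmatShift n μ t + Tmat n μ t * Amat n
      = (Amat n + (μ t)⁻¹ • vecMulVec (Balpha n μ t) (e1vec n)) * Tmat n μ t := by
    ext j k
    rw [Matrix.add_mul, Matrix.add_apply, Matrix.add_apply, mulA_apply, Amul_apply,
      Matrix.smul_mul, Matrix.smul_apply, vmv_mul_apply n hn0, smul_eq_mul]
    have hT0 : Tmat n μ t ⟨0, hn0⟩ k = if (k : ℕ) = 0 then μ t else 0 := by
      show Tent n μ t 0 (k : ℕ) = _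
      by_cases hk : (k : ℕ) = 0
      · rw [if_pos hk, Tent, if_pos (by omega), hk]
        simp [alphaCoef_zero]
      · rw [if_neg hk, Tent, if_neg (by omega)]
    rw [hT0]
    by_cases hk : (k : ℕ) = 0
    · rw [if_pos hk, dif_neg (by omega : ¬ 0 < (k : ℕ))]
      have hS : TmatShift n μ t j k = Sent n μ t (j : ℕ) 0 := by
        rw [show (0 : ℕ) = (k : ℕ) from hk.symm]; rfl
      rw [hS, add_zero]
      have hB : (μ t)⁻¹ * (Balpha n μ t j * μ t)
          = (-1 : ℝ) ^ (j : ℕ) * (n.choose ((j : ℕ) + 1)) * iteratedDeriv ((j : ℕ) + 1) μ t := by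
        field_simp [Balpha]
        rfl
      rw [hB]
      by_cases hj : (j : ℕ) + 1 < n
      · rw [dif_pos hj]
        have hTj : Tmat n μ t ⟨(j : ℕ) + 1, hj⟩ k = Tent n μ t ((j : ℕ) + 1) 0 := by
          rw [show (0 : ℕ) = (k : ℕ) from hk.symm]; rfl
        rw [hTj]
        exact keyC n μ t (j : ℕ) hj
      · rw [dif_neg hj, zero_add]
        exact keyD n μ t (j : ℕ) (by omega)
    · rw [if_neg hk, mul_zero, mul_zero, add_zero, dif_pos (by omega : 0 < (k : ℕ))]
      have hS : TmatShift n μ t j k = Sent n μ t (j : ℕ) (k : ℕ) := rfl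
      have hT : Tmat n μ t j ⟨(k : ℕ) - 1, by omega⟩ = Tent n μ t (j : ℕ) ((k : ℕ) - 1) := rfl
      rw [hS, hT]
      by_cases hj : (j : ℕ) + 1 < n
      · rw [dif_pos hj]
        have hTj : Tmat n μ t ⟨(j : ℕ) + 1, hj⟩ k = Tent n μ t ((j : ℕ) + 1) (k : ℕ) := rfl
        rw [hTj]
        exact keyA n μ t (j : ℕ) (k : ℕ) hj (by omega)
      · rw [dif_neg hj]
        exact keyB n μ t (j : ℕ) (k : ℕ) (by omega) (by omega) k.isLt
  have h2 : (TmatShift n μ t + Tmat n μ t * Amat n) * (Tmat n μ t)⁻¹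
      = Amat n + (μ t)⁻¹ • vecMulVec (Balpha n μ t) (e1vec n) := by
    rw [key, Matrix.mul_assoc, hinv, Matrix.mul_one]
  refine ⟨hunit, h2, ?_⟩
  rw [h2]
  ext j k
  by_cases hk : (k : ℕ) = 0
  · have hne : ¬ ((0 : ℕ) = (j : ℕ) + 1) := by omega
    simp only [Matrix.add_apply, Matrix.smul_apply, Matrix.of_apply, Amat, vecMulVec_apply,
      e1vec, Balpha, hk, smul_eq_mul, if_true, if_neg hne, mul_one, zero_add, if_pos rfl]
    rw [div_eq_inv_mul]
  · simp only [Matrix.add_apply, Matrix.smul_apply, Matrix.of_apply, Amat, vecMulVec_apply,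
      e1vec, hk, if_neg hk, smul_eq_mul, mul_zero, add_zero]
    split <;> simp
end

section
/- Fix an integer n ≥ 2. The coefficients α_{j,i} satisfy the closed form α_{n−1,i} = (−1)^i (i+1) for all i = 0, …, n−2. -/
open Matrix

/-- for `n ≥ 2`, `α_{n-1,i} = (-1)^i (i+1)` for all `i = 0, …, n-2`. -/
theorem alphaCoef_pred (n : ℕ) (hn : 2 ≤ n) :
    ∀ i ≤ n - 2, alphaCoef n (n - 1) i = (-1) ^ i * ((i : ℤ) + 1) := by
  intro i hi
  induction i with
  | zero =>
    rw [alphaCoef]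
    simp [show ¬ n ≤ n - 1 by omega]
  | succ k ih =>
    rw [alphaCoef]
    rw [show n - 1 + 1 = n by omega, if_neg (by omega : ¬ n ≤ n - 1), if_neg (Nat.succ_ne_zero k)]
    rw [alphaCoef, if_pos le_rfl]
    simp only [Nat.succ_sub_one]
    rw [ih (by omega)]
    push_cast
    ring
end
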